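/- Let z : ℝ → ℂ be a parametrised curve that is twice differentiable at s with z′(s) ≠ 0. Then the double-layer kernel Im( z′(s) / (z(s) − z(t)) ) has a finite diagonal limit: lim_{t → s} Im( z′(s) / (z(s) − z(t)) ) = Im( z″(s) / (2 z′(s)) ). -/

import Mathlib

open Filter Topology

lemma taylor2_real (u u' : ℝ → ℝ) (u'' : ℝ) (s : ℝ)
    (hu : ∀ᶠ t in 𝓝 s, HasDerivAt u (u' t) t) (hu'' : HasDerivAt u' u'' s) :
    Tendsto (fun t => (u t - u s - u' s * (t - s)) / (t - s) ^ 2) (𝓝[≠] s) (𝓝 (u'' / 2)) := by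
  have hff' : ∀ᶠ t in 𝓝[≠] s, HasDerivAt
      (fun t => u t - u s - u' s * (t - s)) (u' t - u' s) t := by
    filter_upwards [nhdsWithin_le_nhds hu] with t ht
    have h1 : HasDerivAt (fun t : ℝ => u' s * (t - s)) (u' s) t := by
      simpa using (((hasDerivAt_id t).sub_const s).const_mul (u' s))
    exact (ht.sub_const (u s)).sub h1
  have hgg' : ∀ᶠ t in 𝓝[≠] s, HasDerivAt (fun t : ℝ => (t - s) ^ 2) (2 * (t - s)) t := by
    filter_upwards with t
    exact (((hasDerivAt_id t).sub_const s).pow 2).congr_deriv (by simp [mul_comm])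
  have hg' : ∀ᶠ t in 𝓝[≠] s, 2 * (t - s) ≠ 0 := by
    filter_upwards [self_mem_nhdsWithin] with t ht
    have : t ≠ s := ht
    simp [sub_ne_zero.mpr this]
  have hfa : Tendsto (fun t => u t - u s - u' s * (t - s)) (𝓝[≠] s) (𝓝 0) := by
    have hc : ContinuousAt u s := (hu.self_of_nhds).continuousAt
    have : Tendsto (fun t => u t - u s - u' s * (t - s)) (𝓝 s) (𝓝 (u s - u s - u' s * (s - s))) :=
      ((hc.tendsto.sub tendsto_const_nhds).sub
        ((tendsto_id.sub tendsto_const_nhds).const_mul (u' s)))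
    simpa using this.mono_left nhdsWithin_le_nhds
  have hga : Tendsto (fun t : ℝ => (t - s) ^ 2) (𝓝[≠] s) (𝓝 0) := by
    have : Tendsto (fun t : ℝ => (t - s) ^ 2) (𝓝 s) (𝓝 ((s - s) ^ 2)) :=
      ((tendsto_id.sub tendsto_const_nhds).pow 2)
    simpa using this.mono_left nhdsWithin_le_nhds
  have hslope : Tendsto (slope u' s) (𝓝[≠] s) (𝓝 u'') :=
    hasDerivAt_iff_tendsto_slope.mp hu''
  have hdiv : Tendsto (fun t => (u' t - u' s) / (2 * (t - s))) (𝓝[≠] s) (𝓝 (u'' / 2)) := by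
    have := hslope.div_const 2
    refine this.congr fun t => ?_
    rw [slope_def_field, div_div, mul_comm]
  exact HasDerivAt.lhopital_zero_nhdsNE hff' hgg' hg' hfa hga hdiv

lemma taylor2_complex (z z' : ℝ → ℂ) (z'' : ℂ) (s : ℝ)
    (hz : ∀ᶠ t in 𝓝 s, HasDerivAt z (z' t) t) (hz'' : HasDerivAt z' z'' s) :
    Tendsto (fun t => (z t - z s - z' s * ((t : ℂ) - s)) / ((t : ℂ) - s) ^ 2)
      (𝓝[≠] s) (𝓝 (z'' / 2)) := by
  have hre : ∀ᶠ t in 𝓝 s, HasDerivAt (fun t => (z t).re) ((z' t).re) t := by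
    filter_upwards [hz] with t ht
    exact (Complex.reCLM.hasFDerivAt.comp_hasDerivAt t ht)
  have him : ∀ᶠ t in 𝓝 s, HasDerivAt (fun t => (z t).im) ((z' t).im) t := by
    filter_upwards [hz] with t ht
    exact (Complex.imCLM.hasFDerivAt.comp_hasDerivAt t ht)
  have hre'' : HasDerivAt (fun t => (z' t).re) z''.re s :=
    Complex.reCLM.hasFDerivAt.comp_hasDerivAt s hz''
  have him'' : HasDerivAt (fun t => (z' t).im) z''.im s :=
    Complex.imCLM.hasFDerivAt.comp_hasDerivAt s hz''
  have hRe := taylor2_real _ _ _ s hre hre''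
  have hIm := taylor2_real _ _ _ s him him''
  have h1 : Tendsto (fun t : ℝ =>
      ((((z t).re - (z s).re - (z' s).re * (t - s)) / (t - s) ^ 2 : ℝ) : ℂ) +
      ((((z t).im - (z s).im - (z' s).im * (t - s)) / (t - s) ^ 2 : ℝ) : ℂ) * Complex.I)
      (𝓝[≠] s) (𝓝 (((z''.re / 2 : ℝ) : ℂ) + ((z''.im / 2 : ℝ) : ℂ) * Complex.I)) :=
    ((Complex.continuous_ofReal.tendsto _).comp hRe).add
      (((Complex.continuous_ofReal.tendsto _).comp hIm).mul_const Complex.I)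
  have key : ∀ t : ℝ, (z t - z s - z' s * ((t : ℂ) - s)) / ((t : ℂ) - s) ^ 2 =
      ((((z t).re - (z s).re - (z' s).re * (t - s)) / (t - s) ^ 2 : ℝ) : ℂ) +
      ((((z t).im - (z s).im - (z' s).im * (t - s)) / (t - s) ^ 2 : ℝ) : ℂ) * Complex.I := by
    intro t
    set N : ℂ := z t - z s - z' s * ((t : ℂ) - s) with hN
    have hd : ((t : ℂ) - s) ^ 2 = (((t - s) ^ 2 : ℝ) : ℂ) := by push_cast; ring
    have hNre : (z t).re - (z s).re - (z' s).re * (t - s) = N.re := by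
      simp [hN, Complex.sub_re, Complex.mul_re]
    have hNim : (z t).im - (z s).im - (z' s).im * (t - s) = N.im := by
      simp [hN, Complex.sub_im, Complex.mul_im]
    rw [hNre, hNim, hd, ← Complex.div_ofReal_re, ← Complex.div_ofReal_im]
    exact (Complex.re_add_im _).symm
  have key2 : (z'' : ℂ) / 2 = ((z''.re / 2 : ℝ) : ℂ) + ((z''.im / 2 : ℝ) : ℂ) * Complex.I := by
    rw [← Complex.div_ofReal_re, ← Complex.div_ofReal_im]
    · push_cast
      exact (Complex.re_add_im _).symm
  rw [key2]
  exact h1.congr fun t => (key t).symm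

/-- Finite diagonal limit of the kernel `M⁽¹⁾`:
`Im(z'(s)/(z(s)-z(t))) → Im(z''(s)/(2z'(s)))` as `t → s`. -/
theorem double_layer_kernel_M1_diagonal_limit (z z' : ℝ → ℂ) (z'' : ℂ) (s : ℝ)
    (hz : ∀ᶠ t in nhds s, HasDerivAt z (z' t) t)
    (hz'' : HasDerivAt z' z'' s) (h0 : z' s ≠ 0) :
    Filter.Tendsto (fun t : ℝ => (z' s / (z s - z t)).im)
      (nhdsWithin s {s}ᶜ) (nhds ((z'' / (2 * z' s)).im)) := by
  have hzs : HasDerivAt z (z' s) s := hz.self_of_nhds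
  set A : ℝ → ℂ := fun t => (z t - z s - z' s * ((t : ℂ) - s)) / ((t : ℂ) - s) ^ 2 with hA_def
  set B : ℝ → ℂ := fun t => (z t - z s) / ((t : ℂ) - s) with hB_def
  have hA : Tendsto A (𝓝[≠] s) (𝓝 (z'' / 2)) := taylor2_complex z z' z'' s hz hz''
  have hB : Tendsto B (𝓝[≠] s) (𝓝 (z' s)) := by
    have h := hasDerivAt_iff_tendsto_slope.mp hzs
    refine h.congr fun t => ?_
    rw [slope_def_module, Complex.real_smul]
    push_cast
    simp only [hB_def]
    rw [eq_comm, div_eq_inv_mul]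
  have hdne : ∀ᶠ t : ℝ in 𝓝[≠] s, ((t : ℂ) - s) ≠ 0 := by
    filter_upwards [self_mem_nhdsWithin] with t ht
    have : t ≠ s := ht
    exact sub_ne_zero.mpr (by exact_mod_cast this)
  have hBne : ∀ᶠ t in 𝓝[≠] s, B t ≠ 0 := hB.eventually_ne h0
  have hzne : ∀ᶠ t : ℝ in 𝓝[≠] s, z t - z s ≠ 0 := by
    filter_upwards [hBne, hdne] with t hb hd h
    exact hb (by simp [hB_def, h])
  have heq : (fun t : ℝ => (A t / B t).im) =ᶠ[𝓝[≠] s]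
      (fun t : ℝ => (z' s / (z s - z t)).im) := by
    filter_upwards [hdne, hzne] with t hd hw
    have hw' : z s - z t ≠ 0 := by
      intro h; exact hw (by rw [← neg_sub] at h; simpa using neg_eq_zero.mp h)
    have key : z' s / (z s - z t) = A t / B t - ((t : ℂ) - s)⁻¹ := by
      simp only [hA_def, hB_def]
      field_simp
      ring
    rw [key, Complex.sub_im]
    have : (((t : ℂ) - s)⁻¹).im = 0 := by
      have : ((t : ℂ) - s) = (((t - s : ℝ) : ℝ) : ℂ) := by push_cast; ring
      rw [this, ← Complex.ofReal_inv]
      simp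
    rw [this, sub_zero]
  have hlim : Tendsto (fun t : ℝ => (A t / B t).im) (𝓝[≠] s) (𝓝 ((z'' / 2 / z' s).im)) :=
    (Complex.continuous_im.tendsto _).comp (hA.div hB h0)
  have : z'' / 2 / z' s = z'' / (2 * z' s) := div_div _ _ _
  rw [this] at hlim
  exact hlim.congr' heq
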